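/- arXiv:2010.11928 — 8 statements merged into one kernel-verified Lean document; each statement's English description precedes it below -/
import Mathlib

section
/- Let n ∈ ℕ and k, k̂ ∈ [n] with k ≤ k̂ and n ≥ k + k̂. Let μ : {0,1,…,n} → ℝ_{≥0} be a measure that is non-increasing on [k, k̂]. If 𝔉 ⊆ [n]^{(≤k̂)} is an intersecting family, then μ(𝔉) ≤ μ(B_{n,1}), where B_{n,1} = {F ⊆ [n] : 1 ∈ F}. -/
open Finset

/-- The shift operation `σ_{ij}` on a set `F ⊆ ℕ`. -/
def shift (i j : ℕ) (F : Finset ℕ) : Finset ℕ :=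
  if j ∈ F ∧ i ∉ F then insert i (F.erase j) else F

/-- The shift operation on a family. -/
def shiftFam (i j : ℕ) (𝔉 : Finset (Finset ℕ)) : Finset (Finset ℕ) :=
  𝔉.image (shift i j) ∪ 𝔉.filter (fun F => shift i j F ∈ 𝔉)

/-- A family of subsets of `[n] = {1,…,n}` is shifted. -/
def IsShifted (n : ℕ) (𝔉 : Finset (Finset ℕ)) : Prop :=
  ∀ i j : ℕ, 1 ≤ i → i < j → j ≤ n → ∀ F ∈ 𝔉, shift i j F ∈ 𝔉

/-- The intersection `⋂_{i ∈ s} G i` (for `s` nonempty). -/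
def interOn {r : ℕ} (s : Finset (Fin r)) (G : Fin r → Finset ℕ) : Finset ℕ :=
  (s.sup G).filter fun x => ∀ i ∈ s, x ∈ G i

/-- The intersection `⋂_{i} G i`. -/
def interAll {r : ℕ} (G : Fin r → Finset ℕ) : Finset ℕ :=
  interOn Finset.univ G

/-- Families `𝔉 0, …, 𝔉 (r-1)` are `r`-cross `t`-intersecting. -/
def CrossIntersecting {r : ℕ} (t : ℕ) (𝔉 : Fin r → Finset (Finset ℕ)) : Prop :=
  ∀ G : Fin r → Finset ℕ, (∀ i, G i ∈ 𝔉 i) → t ≤ (interAll G).card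

/-- `a` is a necessary intersection point of the cross `t`-intersecting families `𝔉`. -/
def IsNIP {r : ℕ} (t : ℕ) (𝔉 : Fin r → Finset (Finset ℕ)) (a : ℕ) : Prop :=
  ∃ G : Fin r → Finset ℕ, (∀ i, G i ∈ 𝔉 i) ∧
    (Finset.Icc 1 a ∩ interAll G).card = t ∧ a ∈ interAll G

/-- An intersecting family. -/
def Intersecting' (𝔉 : Finset (Finset ℕ)) : Prop :=
  ∀ F ∈ 𝔉, ∀ F' ∈ 𝔉, (F ∩ F').Nonempty

/-- `a` is a necessary intersection point of the intersecting family `𝔉`. -/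
def IsNIP1 (𝔉 : Finset (Finset ℕ)) (a : ℕ) : Prop :=
  ∃ F ∈ 𝔉, ∃ F' ∈ 𝔉, (Finset.Icc 1 a ∩ F ∩ F').card = 1 ∧ a ∈ F ∩ F'

/-- `A_{n,a,t} = {F ⊆ [n] : |F ∩ [a]| ≥ t}`. -/
def famA (n a t : ℕ) : Finset (Finset ℕ) :=
  (Finset.Icc 1 n).powerset.filter (fun F => t ≤ (F ∩ Finset.Icc 1 a).card)

/-- `B_{n,a} = {F ⊆ [n] : [a] ⊆ F}`. -/
def famB (n a : ℕ) : Finset (Finset ℕ) :=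
  (Finset.Icc 1 n).powerset.filter (fun F => Finset.Icc 1 a ⊆ F)

/-- `F ∈ 𝔉 j` depends on `a`, i.e. `F ∈ 𝔉_j(a)`. -/
def DependsOnPt {r : ℕ} (t : ℕ) (𝔉 : Fin r → Finset (Finset ℕ)) (a : ℕ) (j : Fin r)
    (F : Finset ℕ) : Prop :=
  F ∈ 𝔉 j ∧ ∃ G : Fin r → Finset ℕ, (∀ i, i ≠ j → G i ∈ 𝔉 i) ∧
    (Finset.Icc 1 a ∩ F ∩ interOn (Finset.univ.erase j) G).card = t ∧
    a ∈ F ∩ interOn (Finset.univ.erase j) G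

lemma erase_univ_nonempty {r : ℕ} (hr : 2 ≤ r) (i : Fin r) :
    (Finset.univ.erase i).Nonempty := by
  rw [← Finset.card_pos, Finset.card_erase_of_mem (Finset.mem_univ i),
    Finset.card_univ, Fintype.card_fin]
  omega
lemma ekr_nat {n s : ℕ} (hs : 2 * s ≤ n) {𝒜 : Finset (Finset ℕ)}
    (hsub : ∀ F ∈ 𝒜, F ⊆ Finset.Icc 1 n) (hcard : ∀ F ∈ 𝒜, F.card = s)
    (hint : Intersecting' 𝒜) : 𝒜.card ≤ (n - 1).choose (s - 1) := by
  classical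
  set e : Fin n → ℕ := fun i => (i : ℕ) + 1 with he
  have hei : Function.Injective e := by
    intro a b hab; simpa [he, Fin.ext_iff] using hab
  set pre : Finset ℕ → Finset (Fin n) := fun F => F.preimage e (hei.injOn) with hpre
  have hmap : ∀ F ∈ 𝒜, (pre F).map ⟨e, hei⟩ = F := by
    intro F hF
    ext x
    simp only [hpre, mem_map, mem_preimage, Function.Embedding.coeFn_mk]
    constructor
    · rintro ⟨i, hi, rfl⟩; exact hi
    · intro hx
      have hx' := hsub F hF hx
      simp only [mem_Icc] at hx'
      refine ⟨⟨x - 1, by omega⟩, ?_, ?_⟩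
      · show (x - 1) + 1 ∈ F
        have hx1 : x - 1 + 1 = x := by omega
        rwa [hx1]
      · show (x - 1) + 1 = x
        omega
  set ℬ : Finset (Finset (Fin n)) := 𝒜.image pre with hB
  have hcardB : ℬ.card = 𝒜.card := by
    rw [hB]
    apply Finset.card_image_of_injOn
    intro F hF F' hF' hFF'
    have := congrArg (fun A => Finset.map ⟨e, hei⟩ A) hFF'
    simpa [hmap F hF, hmap F' hF'] using this
  have hsized : (ℬ : Set (Finset (Fin n))).Sized s := by
    intro A hA
    simp only [hB, coe_image, Set.mem_image, mem_coe] at hA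
    obtain ⟨F, hF, rfl⟩ := hA
    have : ((pre F).map ⟨e, hei⟩).card = F.card := by rw [hmap F hF]
    simpa [Finset.card_map, hcard F hF] using this
  have hintB : (ℬ : Set (Finset (Fin n))).Intersecting := by
    intro A hA A' hA'
    simp only [hB, coe_image, Set.mem_image, mem_coe] at hA hA'
    obtain ⟨F, hF, rfl⟩ := hA
    obtain ⟨F', hF', rfl⟩ := hA'
    obtain ⟨x, hx⟩ := hint F hF F' hF'
    rw [Finset.mem_inter] at hx
    have hx1 := hsub F hF hx.1
    simp only [mem_Icc] at hx1
    intro hdis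
    have : (⟨x - 1, by omega⟩ : Fin n) ∈ pre F ⊓ pre F' := by
      simp only [Finset.inf_eq_inter, mem_inter, hpre, mem_preimage]
      constructor
      · show (x - 1) + 1 ∈ F
        have hx2 : x - 1 + 1 = x := by omega
        rw [hx2]; exact hx.1
      · show (x - 1) + 1 ∈ F'
        have hx2 : x - 1 + 1 = x := by omega
        rw [hx2]; exact hx.2
    exact absurd (hdis.le_bot this) (by simp)
  calc 𝒜.card = ℬ.card := hcardB.symm
    _ ≤ (n - 1).choose (s - 1) := Finset.erdos_ko_rado hintB hsized
      (by omega : s ≤ n / 2)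

lemma pair_nat {n a b : ℕ} (hab : a + b = n) {𝔉 : Finset (Finset ℕ)}
    (hsub : ∀ F ∈ 𝔉, F ⊆ Finset.Icc 1 n) (hint : Intersecting' 𝔉) :
    (𝔉.filter (fun F => F.card = a)).card + (𝔉.filter (fun F => F.card = b)).card
      ≤ n.choose a := by
  classical
  set 𝒜 := 𝔉.filter (fun F => F.card = a) with hA
  set 𝒞 := (𝔉.filter (fun F => F.card = b)).image (fun X => Finset.Icc 1 n \ X) with hC
  have hCcard : 𝒞.card = (𝔉.filter (fun F => F.card = b)).card := by
    rw [hC]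
    apply Finset.card_image_of_injOn
    intro X hX Y hY hXY
    simp only [mem_coe, mem_filter] at hX hY
    have hX' := hsub X hX.1
    have hY' := hsub Y hY.1
    have : Finset.Icc 1 n \ (Finset.Icc 1 n \ X) = Finset.Icc 1 n \ (Finset.Icc 1 n \ Y) := by
      simp only at hXY; rw [hXY]
    rwa [Finset.sdiff_sdiff_eq_self hX', Finset.sdiff_sdiff_eq_self hY'] at this
  have hdisj : Disjoint 𝒜 𝒞 := by
    rw [Finset.disjoint_left]
    intro Y hYA hYC
    rw [hA, mem_filter] at hYA
    rw [hC, mem_image] at hYC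
    obtain ⟨X, hX, rfl⟩ := hYC
    rw [mem_filter] at hX
    obtain ⟨x, hx⟩ := hint _ hYA.1 _ hX.1
    rw [mem_inter, mem_sdiff] at hx
    exact hx.1.2 hx.2
  have hsubP : 𝒜 ∪ 𝒞 ⊆ (Finset.Icc 1 n).powersetCard a := by
    intro Y hY
    rw [mem_union] at hY
    rw [Finset.mem_powersetCard]
    rcases hY with hY | hY
    · rw [hA, mem_filter] at hY
      exact ⟨hsub _ hY.1, hY.2⟩
    · rw [hC, mem_image] at hY
      obtain ⟨X, hX, rfl⟩ := hY
      rw [mem_filter] at hX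
      refine ⟨Finset.sdiff_subset, ?_⟩
      rw [Finset.card_sdiff_of_subset (hsub _ hX.1), Nat.card_Icc, hX.2]
      omega
  calc 𝒜.card + (𝔉.filter (fun F => F.card = b)).card
      = 𝒜.card + 𝒞.card := by rw [hCcard]
    _ = (𝒜 ∪ 𝒞).card := (Finset.card_union_of_disjoint hdisj).symm
    _ ≤ ((Finset.Icc 1 n).powersetCard a).card := Finset.card_le_card hsubP
    _ = n.choose a := by rw [Finset.card_powersetCard, Nat.card_Icc]; norm_num

lemma abel_sum (k : ℕ) (f g : ℕ → ℝ) :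
    ∀ K, k ≤ K → ∀ μ : ℕ → ℝ,
    (∀ m, k ≤ m → m ≤ K → ∑ s ∈ Icc k m, f s ≤ ∑ s ∈ Icc k m, g s) →
    0 ≤ μ K → (∀ m, k ≤ m → m < K → μ (m + 1) ≤ μ m) →
    ∑ s ∈ Icc k K, f s * μ s ≤ ∑ s ∈ Icc k K, g s * μ s := by
  intro K
  induction K with
  | zero =>
    intro hk μ hfg hμ _
    interval_cases k
    simpa using mul_le_mul_of_nonneg_right (by simpa using hfg 0 le_rfl le_rfl) hμ
  | succ K ih =>
    intro hk μ hfg hμ hmono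
    rcases Nat.lt_or_ge K k with hKk | hKk
    · -- k = K + 1
      have hkK : k = K + 1 := by omega
      subst hkK
      simpa using mul_le_mul_of_nonneg_right (by simpa using hfg (K+1) le_rfl le_rfl) hμ
    · -- k ≤ K
      have hsplit : ∀ h : ℕ → ℝ, ∑ s ∈ Icc k (K+1), h s * μ s
          = ∑ s ∈ Icc k (K+1), h s * (μ s - μ (K+1)) + (∑ s ∈ Icc k (K+1), h s) * μ (K+1) := by
        intro h
        rw [Finset.sum_mul, ← Finset.sum_add_distrib]
        apply Finset.sum_congr rfl
        intro s _
        ring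
      rw [hsplit f, hsplit g]
      have h1 : ∑ s ∈ Icc k (K+1), f s * (μ s - μ (K+1))
          ≤ ∑ s ∈ Icc k (K+1), g s * (μ s - μ (K+1)) := by
        rw [Finset.sum_Icc_succ_top (by omega : k ≤ K + 1),
          Finset.sum_Icc_succ_top (by omega : k ≤ K + 1)]
        simp only [sub_self, mul_zero, add_zero]
        apply ih hKk (fun s => μ s - μ (K+1))
        · intro m hm hmK; exact hfg m hm (by omega)
        · have := hmono K hKk (by omega); linarith
        · intro m hm hmK
          have := hmono m hm (by omega)
          linarith
      have h2 : (∑ s ∈ Icc k (K+1), f s) * μ (K+1)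
          ≤ (∑ s ∈ Icc k (K+1), g s) * μ (K+1) :=
        mul_le_mul_of_nonneg_right (hfg (K+1) (by omega) le_rfl) hμ
      linarith

lemma window_bound {n k m : ℕ} (hk1 : 1 ≤ k) (hkm : k ≤ m) (hnm : k + m ≤ n)
    {𝔉 : Finset (Finset ℕ)} (hsub : ∀ F ∈ 𝔉, F ⊆ Finset.Icc 1 n)
    (hint : Intersecting' 𝔉) :
    ∑ s ∈ Icc k m, (𝔉.filter (fun F => F.card = s)).card
      ≤ ∑ s ∈ Icc k m, (n - 1).choose (s - 1) := by
  classical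
  set f : ℕ → ℕ := fun s => (𝔉.filter (fun F => F.card = s)).card with hf
  set g : ℕ → ℕ := fun s => (n - 1).choose (s - 1) with hg
  set A := (Icc k m).filter (fun s => 2 * s ≤ n) with hA
  set B := (Icc k m).filter (fun s => ¬ (2 * s ≤ n)) with hB
  have hsplitf : ∀ h : ℕ → ℕ, ∑ s ∈ Icc k m, h s = ∑ s ∈ A, h s + ∑ s ∈ B, h s := by
    intro h
    rw [hA, hB, Finset.sum_filter_add_sum_filter_not]
  -- B' = image of B under (n - ·), contained in A
  set B' := B.image (fun s => n - s) with hB'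
  have hmemB : ∀ s ∈ B, k ≤ s ∧ s ≤ m ∧ n < 2 * s := by
    intro s hs
    rw [hB, mem_filter, mem_Icc] at hs
    omega
  have hinj : ∀ x ∈ B, ∀ y ∈ B, n - x = n - y → x = y := by
    intro x hx y hy hxy
    have h1 := hmemB x hx
    have h2 := hmemB y hy
    omega
  have hB'A : B' ⊆ A := by
    intro t ht
    rw [hB', mem_image] at ht
    obtain ⟨s, hs, rfl⟩ := ht
    have h1 := hmemB s hs
    rw [hA, mem_filter, mem_Icc]
    omega
  have hsum2 : ∀ h : ℕ → ℕ, ∑ s ∈ A, h s = ∑ s ∈ A \ B', h s + ∑ s ∈ B, h (n - s) := by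
    intro h
    rw [← Finset.sum_image hinj, Finset.sum_sdiff hB'A]
  have key : ∀ h : ℕ → ℕ, ∑ s ∈ Icc k m, h s
      = ∑ s ∈ A \ B', h s + ∑ s ∈ B, (h (n - s) + h s) := by
    intro h
    rw [hsplitf h, hsum2 h, Finset.sum_add_distrib]
    ring
  rw [key f, key g]
  have part1 : ∑ s ∈ A \ B', f s ≤ ∑ s ∈ A \ B', g s := by
    apply Finset.sum_le_sum
    intro s hs
    have hsA : s ∈ A := Finset.mem_sdiff.mp hs |>.1
    rw [hA, mem_filter, mem_Icc] at hsA
    apply ekr_nat hsA.2 (fun F hF => hsub F (Finset.mem_filter.mp hF).1)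
      (fun F hF => (Finset.mem_filter.mp hF).2)
    intro F hF F' hF'
    exact hint F (Finset.mem_filter.mp hF).1 F' (Finset.mem_filter.mp hF').1
  have part2 : ∑ s ∈ B, (f (n - s) + f s) ≤ ∑ s ∈ B, (g (n - s) + g s) := by
    apply Finset.sum_le_sum
    intro s hs
    obtain ⟨h1, h2, h3⟩ := hmemB s hs
    have hsn : s ≤ n := by omega
    have hpair := pair_nat (by omega : (n - s) + s = n) hsub hint
    refine le_trans hpair ?_
    show n.choose (n - s) ≤ (n - 1).choose (n - s - 1) + (n - 1).choose (s - 1)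
    have e1 : (n - 1).choose (s - 1) = (n - 1).choose (n - s) := by
      have : s - 1 = (n - 1) - (n - s) := by omega
      rw [this, Nat.choose_symm (by omega)]
    rw [e1]
    have e2 : (n - 1).choose (n - s - 1) + (n - 1).choose (n - s) = n.choose (n - s) := by
      have hn1 : n = (n - 1) + 1 := by omega
      have hns : n - s = (n - s - 1) + 1 := by omega
      calc (n - 1).choose (n - s - 1) + (n - 1).choose (n - s)
          = (n - 1).choose (n - s - 1) + (n - 1).choose ((n - s - 1) + 1) := by rw [← hns]
        _ = ((n - 1) + 1).choose ((n - s - 1) + 1) := (Nat.choose_succ_succ _ _).symm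
        _ = n.choose (n - s) := by rw [← hn1, ← hns]
    omega
  omega

/-- **Theorem 1.5**: the maximal measure of an intersecting family. -/
theorem intersecting_measure_bound
    (n k khat : ℕ) (hk1 : 1 ≤ k) (hkk : k ≤ khat) (hkn : khat ≤ n)
    (hn : k + khat ≤ n)
    (μ : ℕ → ℝ) (hμ0 : ∀ x ≤ n, 0 ≤ μ x)
    (hmono : ∀ x y, k ≤ x → x ≤ y → y ≤ khat → μ y ≤ μ x)
    (𝔉 : Finset (Finset ℕ))
    (hsub : 𝔉 ⊆ (Finset.Icc 1 n).powerset.filter (fun F => F.card ≤ khat))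
    (hint : Intersecting' 𝔉) :
    ∑ F ∈ 𝔉, μ F.card ≤ ∑ F ∈ famB n 1, μ F.card := by
  classical
  have hmem : ∀ F ∈ 𝔉, F ⊆ Finset.Icc 1 n ∧ F.card ≤ khat := by
    intro F hF
    have := hsub hF
    rw [mem_filter, mem_powerset] at this
    exact this
  have hpos : ∀ F ∈ 𝔉, 1 ≤ F.card := by
    intro F hF
    have := hint F hF F hF
    rw [Finset.inter_self] at this
    exact Finset.card_pos.mpr this
  set f : ℕ → ℕ := fun s => (𝔉.filter (fun F => F.card = s)).card with hf
  set g : ℕ → ℕ := fun s => (n - 1).choose (s - 1) with hg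
  -- LHS as a sum over levels
  have hLHS : ∑ F ∈ 𝔉, μ F.card = ∑ s ∈ Icc 1 khat, (f s : ℝ) * μ s := by
    rw [← Finset.sum_fiberwise_of_maps_to (g := Finset.card) (t := Icc 1 khat)
      (fun F hF => by rw [mem_Icc]; exact ⟨hpos F hF, (hmem F hF).2⟩)]
    apply Finset.sum_congr rfl
    intro s _
    have : ∀ F ∈ 𝔉.filter (fun F => F.card = s), μ F.card = μ s := by
      intro F hF
      rw [(Finset.mem_filter.mp hF).2]
    rw [Finset.sum_congr rfl this, Finset.sum_const, nsmul_eq_mul, hf]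
  -- levelwise EKR for small s
  have hlevel : ∀ s, 1 ≤ s → 2 * s ≤ n → f s ≤ g s := by
    intro s _ h2s
    apply ekr_nat h2s (fun F hF => (hmem F (Finset.mem_filter.mp hF).1).1)
      (fun F hF => (Finset.mem_filter.mp hF).2)
    intro F hF F' hF'
    exact hint F (Finset.mem_filter.mp hF).1 F' (Finset.mem_filter.mp hF').1
  -- splitting the level range
  have hsplit : ∀ h : ℕ → ℝ, ∑ s ∈ Icc 1 khat, h s
      = ∑ s ∈ Ico 1 k, h s + ∑ s ∈ Icc k khat, h s := by
    intro h
    rw [← Finset.sum_union (by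
      rw [Finset.disjoint_left]
      intro a ha hb
      rw [mem_Ico] at ha
      rw [mem_Icc] at hb
      omega)]
    congr 1
    ext a
    simp only [mem_union, mem_Ico, mem_Icc]
    omega
  have main : ∑ s ∈ Icc 1 khat, (f s : ℝ) * μ s ≤ ∑ s ∈ Icc 1 khat, (g s : ℝ) * μ s := by
    rw [hsplit (fun s => (f s : ℝ) * μ s), hsplit (fun s => (g s : ℝ) * μ s)]
    have partA : ∑ s ∈ Ico 1 k, (f s : ℝ) * μ s ≤ ∑ s ∈ Ico 1 k, (g s : ℝ) * μ s := by
      apply Finset.sum_le_sum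
      intro s hs
      rw [mem_Ico] at hs
      have := hlevel s hs.1 (by omega)
      apply mul_le_mul_of_nonneg_right (by exact_mod_cast this)
      exact hμ0 s (by omega)
    have partB : ∑ s ∈ Icc k khat, (f s : ℝ) * μ s ≤ ∑ s ∈ Icc k khat, (g s : ℝ) * μ s := by
      apply abel_sum k (fun s => (f s : ℝ)) (fun s => (g s : ℝ)) khat hkk μ
      · intro m hm hmk
        have := window_bound hk1 hm (by omega) (fun F hF => (hmem F hF).1) hint
        exact_mod_cast this
      · exact hμ0 khat (by omega)
      · intro m hm hmk
        exact hmono m (m+1) hm (by omega) (by omega)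
    linarith
  -- RHS
  have hRHS : ∑ s ∈ Icc 1 khat, (g s : ℝ) * μ s ≤ ∑ F ∈ famB n 1, μ F.card := by
    set T := (famB n 1).filter (fun F => F.card ≤ khat) with hT
    have hTsub : ∀ F ∈ T, F ⊆ Finset.Icc 1 n ∧ (1:ℕ) ∈ F ∧ F.card ≤ khat := by
      intro F hF
      rw [hT, mem_filter, famB, mem_filter, mem_powerset] at hF
      refine ⟨hF.1.1, ?_, hF.2⟩
      have := hF.1.2
      simpa using this (by simp : (1:ℕ) ∈ Finset.Icc 1 1)
    have step1 : ∑ F ∈ T, μ F.card ≤ ∑ F ∈ famB n 1, μ F.card := by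
      apply Finset.sum_le_sum_of_subset_of_nonneg (Finset.filter_subset _ _)
      intro F hF _
      rw [famB, mem_filter, mem_powerset] at hF
      apply hμ0
      calc F.card ≤ (Finset.Icc 1 n).card := Finset.card_le_card hF.1
        _ = n := by rw [Nat.card_Icc]; omega
    have step2 : ∑ F ∈ T, μ F.card = ∑ s ∈ Icc 1 khat,
        ((T.filter (fun F => F.card = s)).card : ℝ) * μ s := by
      rw [← Finset.sum_fiberwise_of_maps_to (g := Finset.card) (t := Icc 1 khat)
        (fun F hF => by
          rw [mem_Icc]
          obtain ⟨h1, h2, h3⟩ := hTsub F hF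
          exact ⟨Finset.card_pos.mpr ⟨1, h2⟩, h3⟩)]
      apply Finset.sum_congr rfl
      intro s _
      have : ∀ F ∈ T.filter (fun F => F.card = s), μ F.card = μ s := by
        intro F hF
        rw [(Finset.mem_filter.mp hF).2]
      rw [Finset.sum_congr rfl this, Finset.sum_const, nsmul_eq_mul]
    have step3 : ∀ s ∈ Icc 1 khat, g s ≤ (T.filter (fun F => F.card = s)).card := by
      intro s hs
      rw [mem_Icc] at hs
      have himg : ((Finset.Icc 2 n).powersetCard (s-1)).image (insert 1)
          ⊆ T.filter (fun F => F.card = s) := by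
        intro F hF
        rw [mem_image] at hF
        obtain ⟨E, hE, rfl⟩ := hF
        rw [Finset.mem_powersetCard] at hE
        have h1E : (1:ℕ) ∉ E := by
          intro h
          have := hE.1 h
          rw [mem_Icc] at this
          omega
        have hcard : (insert 1 E).card = s := by
          rw [Finset.card_insert_of_notMem h1E, hE.2]
          omega
        rw [mem_filter, hT, mem_filter, famB, mem_filter, mem_powerset]
        refine ⟨⟨⟨?_, ?_⟩, by omega⟩, hcard⟩
        · apply Finset.insert_subset (by rw [mem_Icc]; omega)
          exact hE.1.trans (Finset.Icc_subset_Icc_left (by omega))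
        · intro x hx
          rw [mem_Icc] at hx
          have : x = 1 := by omega
          rw [this]
          exact Finset.mem_insert_self _ _
      have hinj : ∀ E ∈ (Finset.Icc 2 n).powersetCard (s-1),
          ∀ E' ∈ (Finset.Icc 2 n).powersetCard (s-1), insert 1 E = insert 1 E' → E = E' := by
        intro E hE E' hE' hEE'
        rw [Finset.mem_powersetCard] at hE hE'
        have h1E : (1:ℕ) ∉ E := fun h => by have := hE.1 h; rw [mem_Icc] at this; omega
        have h1E' : (1:ℕ) ∉ E' := fun h => by have := hE'.1 h; rw [mem_Icc] at this; omega
        have := congrArg (fun X => X.erase 1) hEE'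
        simpa [Finset.erase_insert_of_ne, Finset.erase_insert, h1E, h1E'] using this
      calc g s = ((Finset.Icc 2 n).powersetCard (s-1)).card := by
            rw [Finset.card_powersetCard, Nat.card_Icc, hg]
            have h2 : n + 1 - 2 = n - 1 := by omega
            rw [h2]
        _ = (((Finset.Icc 2 n).powersetCard (s-1)).image (insert 1)).card :=
            (Finset.card_image_of_injOn hinj).symm
        _ ≤ _ := Finset.card_le_card himg
    calc ∑ s ∈ Icc 1 khat, (g s : ℝ) * μ s
        ≤ ∑ s ∈ Icc 1 khat, ((T.filter (fun F => F.card = s)).card : ℝ) * μ s := by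
          apply Finset.sum_le_sum
          intro s hs
          apply mul_le_mul_of_nonneg_right
          · exact_mod_cast step3 s hs
          · rw [mem_Icc] at hs; exact hμ0 s (by omega)
      _ = ∑ F ∈ T, μ F.card := step2.symm
      _ ≤ _ := step1
  rw [hLHS]
  exact main.trans hRHS
end

section
/- Let n ≥ 1 be an integer and p ∈ [0, 1/2]. If 𝔉 ⊆ 𝒫([n]) is an intersecting family, then ρ_p(𝔉) ≤ p. -/
open Finset

/-- `F ∈ 𝔉 j` depends on `a`, i.e. `F ∈ 𝔉_j(a)`. -/
def DependsOn' {r : ℕ} (t : ℕ) (𝔉 : Fin r → Finset (Finset ℕ)) (a : ℕ) (j : Fin r)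
    (F : Finset ℕ) : Prop :=
  F ∈ 𝔉 j ∧ ∃ G : Fin r → Finset ℕ, (∀ i, i ≠ j → G i ∈ 𝔉 i) ∧
    (Finset.Icc 1 a ∩ F ∩ interOn (Finset.univ.erase j) G).card = t ∧
    a ∈ F ∩ interOn (Finset.univ.erase j) G

def arcK (N k : ℕ) (t : ZMod N) : Finset (ZMod N) :=
  (Finset.range k).image (fun i : ℕ => t + (i : ZMod N))

lemma mem_arcK {N k : ℕ} {t x : ZMod N} :
    x ∈ arcK N k t ↔ ∃ i < k, x = t + (i : ZMod N) := by
  simp [arcK, eq_comm]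

lemma arcK_card (N k : ℕ) [NeZero N] (hk : k ≤ N) (t : ZMod N) :
    (arcK N k t).card = k := by
  rw [arcK, Finset.card_image_of_injOn, Finset.card_range]
  intro i hi j hj hij
  simp only [Finset.coe_range, Set.mem_Iio] at hi hj
  have h : ((i : ℕ) : ZMod N) = ((j : ℕ) : ZMod N) := add_left_cancel hij
  have h1 := ZMod.val_cast_of_lt (n := N) (lt_of_lt_of_le hi hk)
  have h2 := ZMod.val_cast_of_lt (n := N) (lt_of_lt_of_le hj hk)
  rw [← h1, ← h2, h]

lemma arcK_disjoint {N k : ℕ} [NeZero N] (hk : 2 * k ≤ N) (a : ZMod N) :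
    ¬ ((arcK N k a) ∩ (arcK N k (a + (k : ZMod N)))).Nonempty := by
  rintro ⟨x, hx⟩
  rw [Finset.mem_inter, mem_arcK, mem_arcK] at hx
  obtain ⟨⟨i, hi, hxi⟩, ⟨j, hj, hxj⟩⟩ := hx
  have h : ((i : ℕ) : ZMod N) = ((k + j : ℕ) : ZMod N) := by
    push_cast
    linear_combination hxj - hxi
  have heq : i = k + j := by
    have h1 := ZMod.val_cast_of_lt (n := N) (show i < N by omega)
    have h2 := ZMod.val_cast_of_lt (n := N) (show k + j < N by omega)
    rw [← h1, ← h2, h]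
  omega

lemma katona_bound {N k : ℕ} [NeZero N] (hk : 2 * k ≤ N) (T : Finset (ZMod N))
    (hT : ∀ t ∈ T, ∀ s ∈ T, ((arcK N k t) ∩ (arcK N k s)).Nonempty) :
    T.card ≤ k := by
  classical
  rcases T.eq_empty_or_nonempty with rfl | ⟨t₀, ht₀⟩
  · simp
  have hsub : T ⊆ (Finset.range k).image
      (fun r : ℕ => if (t₀ + (r : ZMod N)) ∈ T then t₀ + (r : ZMod N)
        else t₀ + (r : ZMod N) - (k : ZMod N)) := by
    intro t ht
    obtain ⟨x, hx⟩ := hT t₀ ht₀ t ht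
    rw [Finset.mem_inter, mem_arcK, mem_arcK] at hx
    obtain ⟨⟨i, hi, hxi⟩, ⟨j, hj, hxj⟩⟩ := hx
    have heq : t₀ + (i : ZMod N) = t + (j : ZMod N) := hxi.symm.trans hxj
    rcases le_or_gt j i with hji | hij
    · have hr : t₀ + ((i - j : ℕ) : ZMod N) = t := by
        rw [Nat.cast_sub hji]
        linear_combination heq
      refine Finset.mem_image.2 ⟨i - j, Finset.mem_range.2 (by omega), ?_⟩
      rw [if_pos (hr ▸ ht), hr]
    · set r := k - (j - i) with hrdef
      have hrk : r < k := by omega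
      have hkey : t + (k : ZMod N) = t₀ + (r : ZMod N) := by
        rw [hrdef, Nat.cast_sub (show j - i ≤ k by omega),
          Nat.cast_sub (show i ≤ j by omega)]
        linear_combination -heq
      have hnotin : t₀ + (r : ZMod N) ∉ T := by
        intro hmem
        have h2 := hT t ht _ hmem
        rw [← hkey] at h2
        exact arcK_disjoint hk t h2
      refine Finset.mem_image.2 ⟨r, Finset.mem_range.2 hrk, ?_⟩
      rw [if_neg hnotin, ← hkey]
      ring
  calc T.card ≤ _ := Finset.card_le_card hsub
    _ ≤ (Finset.range k).card := Finset.card_image_le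
    _ = k := Finset.card_range k

open Classical in
/-- the random set induced by `f` and arc start `t` -/
noncomputable def fSet (N k n : ℕ) (f : Fin n → ZMod N) (t : ZMod N) : Finset ℕ :=
  (Finset.univ.filter (fun i : Fin n => f i ∈ arcK N k t)).image (fun i : Fin n => (i : ℕ) + 1)

lemma mem_fSet {N k n : ℕ} {f : Fin n → ZMod N} {t : ZMod N} {m : ℕ} :
    m ∈ fSet N k n f t ↔ ∃ i : Fin n, f i ∈ arcK N k t ∧ (i : ℕ) + 1 = m := by
  classical
  simp [fSet]

lemma fiber_card (N k n : ℕ) [NeZero N] (hk : k ≤ N) (t : ZMod N)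
    (F : Finset ℕ) (hF : F ⊆ Finset.Icc 1 n) :
    (Finset.univ.filter (fun f : Fin n → ZMod N => fSet N k n f t = F)).card
      = k ^ F.card * (N - k) ^ (n - F.card) := by
  classical
  have hfilter : Finset.univ.filter (fun f : Fin n → ZMod N => fSet N k n f t = F)
      = Fintype.piFinset (fun i : Fin n =>
          if (i : ℕ) + 1 ∈ F then arcK N k t else (arcK N k t)ᶜ) := by
    ext f
    simp only [Finset.mem_filter, Finset.mem_univ, true_and, Fintype.mem_piFinset]
    constructor
    · rintro rfl
      intro i
      by_cases hiF : f i ∈ arcK N k t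
      · rw [if_pos (mem_fSet.2 ⟨i, hiF, rfl⟩)]
        exact hiF
      · rw [if_neg, Finset.mem_compl]
        · exact hiF
        · intro hmem
          obtain ⟨i', hi', he⟩ := mem_fSet.1 hmem
          have : i' = i := by ext; omega
          exact hiF (this ▸ hi')
    · intro h
      ext m
      rw [mem_fSet]
      constructor
      · rintro ⟨i, hia, rfl⟩
        have := h i
        by_contra hm
        rw [if_neg hm, Finset.mem_compl] at this
        exact this hia
      · intro hm
        have hm' := Finset.mem_Icc.1 (hF hm)
        refine ⟨⟨m - 1, by omega⟩, ?_, by simp only [Fin.val_mk]; omega⟩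
        have h2 := h ⟨m - 1, by omega⟩
        have h3 : (↑(⟨m - 1, by omega⟩ : Fin n) : ℕ) + 1 = m := by
          simp only [Fin.val_mk]; omega
        rw [h3, if_pos hm] at h2
        exact h2
  rw [hfilter, Fintype.card_piFinset]
  have hcompl : ∀ i : Fin n, (if (i : ℕ) + 1 ∈ F then arcK N k t else (arcK N k t)ᶜ).card
      = if (i : ℕ) + 1 ∈ F then k else N - k := by
    intro i
    by_cases hiF : (i : ℕ) + 1 ∈ F
    · rw [if_pos hiF, if_pos hiF, arcK_card N k hk]
    · rw [if_neg hiF, if_neg hiF, Finset.card_compl, arcK_card N k hk, ZMod.card]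
  simp only [hcompl]
  rw [Finset.prod_ite (fun _ => k) (fun _ => N - k), Finset.prod_const, Finset.prod_const]
  have hc : (Finset.univ.filter fun i : Fin n => (i : ℕ) + 1 ∈ F).card = F.card := by
    refine Finset.card_bij (fun i _ => (i : ℕ) + 1) ?_ ?_ ?_
    · intro a ha
      exact (Finset.mem_filter.1 ha).2
    · intro a _ b _ hab
      have h4 : (a : ℕ) + 1 = (b : ℕ) + 1 := hab
      ext
      omega
    · intro m hm
      have hm' := Finset.mem_Icc.1 (hF hm)
      refine ⟨⟨m - 1, by omega⟩, Finset.mem_filter.2 ⟨Finset.mem_univ _, ?_⟩, by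
        simp only [Fin.val_mk]; omega⟩
      have h3 : (↑(⟨m - 1, by omega⟩ : Fin n) : ℕ) + 1 = m := by
        simp only [Fin.val_mk]; omega
      rw [h3]
      exact hm
  have hc2 : (Finset.univ.filter fun i : Fin n => ¬((i : ℕ) + 1 ∈ F)).card = n - F.card := by
    have := Finset.card_filter_add_card_filter_not
      (s := (Finset.univ : Finset (Fin n))) (p := fun i : Fin n => (i : ℕ) + 1 ∈ F)
    rw [Finset.card_univ, Fintype.card_fin, hc] at this
    omega
  rw [hc, hc2]

lemma main_count (N k n : ℕ) [NeZero N] (hk : 2 * k ≤ N)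
    (𝔉 : Finset (Finset ℕ)) (hsub : 𝔉 ⊆ (Finset.Icc 1 n).powerset)
    (hint : Intersecting' 𝔉) :
    N * ∑ F ∈ 𝔉, k ^ F.card * (N - k) ^ (n - F.card) ≤ k * N ^ n := by
  classical
  have step1 : ∀ t : ZMod N,
      (Finset.univ.filter (fun f : Fin n → ZMod N => fSet N k n f t ∈ 𝔉)).card
        = ∑ F ∈ 𝔉, k ^ F.card * (N - k) ^ (n - F.card) := by
    intro t
    rw [Finset.card_eq_sum_card_fiberwise (f := fun f => fSet N k n f t) (t := 𝔉)
      (s := Finset.univ.filter (fun f : Fin n → ZMod N => fSet N k n f t ∈ 𝔉))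
      (fun f hf => (Finset.mem_filter.1 hf).2)]
    refine Finset.sum_congr rfl fun F hF => ?_
    rw [Finset.filter_filter]
    have heqf : (Finset.univ.filter
        fun f : Fin n → ZMod N => fSet N k n f t ∈ 𝔉 ∧ fSet N k n f t = F)
        = Finset.univ.filter fun f : Fin n → ZMod N => fSet N k n f t = F := by
      apply Finset.filter_congr
      intro f _
      exact ⟨fun h => h.2, fun h => ⟨h ▸ hF, h⟩⟩
    rw [heqf, fiber_card N k n (by omega) t F (Finset.mem_powerset.1 (hsub hF))]
  have step2 : ∀ f : Fin n → ZMod N,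
      (Finset.univ.filter (fun t : ZMod N => fSet N k n f t ∈ 𝔉)).card ≤ k := by
    intro f
    apply katona_bound hk
    intro t ht s hs
    rw [Finset.mem_filter] at ht hs
    obtain ⟨m, hm⟩ := hint _ ht.2 _ hs.2
    rw [Finset.mem_inter] at hm
    obtain ⟨i, hit, him⟩ := mem_fSet.1 hm.1
    obtain ⟨i', his, him'⟩ := mem_fSet.1 hm.2
    have hii : i' = i := by ext; omega
    exact ⟨f i, Finset.mem_inter.2 ⟨hit, hii ▸ his⟩⟩
  calc N * ∑ F ∈ 𝔉, k ^ F.card * (N - k) ^ (n - F.card)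
      = ∑ _t : ZMod N, ∑ F ∈ 𝔉, k ^ F.card * (N - k) ^ (n - F.card) := by
        rw [Finset.sum_const, smul_eq_mul, Finset.card_univ, ZMod.card]
    _ = ∑ t : ZMod N,
        (Finset.univ.filter (fun f : Fin n → ZMod N => fSet N k n f t ∈ 𝔉)).card := by
        exact Finset.sum_congr rfl fun t _ => (step1 t).symm
    _ = ∑ t : ZMod N, ∑ f : Fin n → ZMod N, (if fSet N k n f t ∈ 𝔉 then 1 else 0) :=
        Finset.sum_congr rfl fun t _ => by rw [Finset.card_filter]
    _ = ∑ f : Fin n → ZMod N, ∑ t : ZMod N, (if fSet N k n f t ∈ 𝔉 then 1 else 0) :=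
        Finset.sum_comm
    _ = ∑ f : Fin n → ZMod N,
        (Finset.univ.filter (fun t : ZMod N => fSet N k n f t ∈ 𝔉)).card :=
        Finset.sum_congr rfl fun f _ => by rw [Finset.card_filter]
    _ ≤ ∑ _f : Fin n → ZMod N, k := Finset.sum_le_sum fun f _ => step2 f
    _ = k * N ^ n := by
        rw [Finset.sum_const, smul_eq_mul, Finset.card_univ, mul_comm]
        congr 1
        rw [Fintype.card_fun, ZMod.card, Fintype.card_fin]

lemma rat_ineq (N k n : ℕ) (hN : 0 < N) (hk : 2 * k ≤ N)
    (𝔉 : Finset (Finset ℕ)) (hsub : 𝔉 ⊆ (Finset.Icc 1 n).powerset)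
    (hint : Intersecting' 𝔉) :
    ∑ F ∈ 𝔉, ((k : ℝ) / N) ^ F.card * (1 - (k : ℝ) / N) ^ (n - F.card) ≤ (k : ℝ) / N := by
  haveI : NeZero N := ⟨hN.ne'⟩
  have h := main_count N k n hk 𝔉 hsub hint
  have hNR : (0 : ℝ) < N := by exact_mod_cast hN
  have hterm : ∀ F ∈ 𝔉, ((k : ℝ) / N) ^ F.card * (1 - (k : ℝ) / N) ^ (n - F.card)
      = ((k : ℝ) ^ F.card * ((N : ℝ) - k) ^ (n - F.card)) / (N : ℝ) ^ n := by
    intro F hF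
    have hcard : F.card ≤ n := by
      have := Finset.card_le_card (Finset.mem_powerset.1 (hsub hF))
      simpa [Nat.card_Icc] using this
    have h1 : 1 - (k : ℝ) / N = ((N : ℝ) - k) / N := by
      field_simp
    rw [h1, div_pow, div_pow, div_mul_div_comm, ← pow_add]
    rw [Nat.add_sub_cancel' hcard]
  rw [Finset.sum_congr rfl hterm, ← Finset.sum_div]
  rw [div_le_div_iff₀ (by positivity) hNR]
  have hcast : (N : ℝ) * ∑ F ∈ 𝔉, (k : ℝ) ^ F.card * ((N : ℝ) - k) ^ (n - F.card)
      ≤ (k : ℝ) * (N : ℝ) ^ n := by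
    have hkN : k ≤ N := by omega
    calc (N : ℝ) * ∑ F ∈ 𝔉, (k : ℝ) ^ F.card * ((N : ℝ) - k) ^ (n - F.card)
        = ((N * ∑ F ∈ 𝔉, k ^ F.card * (N - k) ^ (n - F.card) : ℕ) : ℝ) := by
          push_cast [Nat.cast_sub hkN]
          ring
      _ ≤ ((k * N ^ n : ℕ) : ℝ) := by exact_mod_cast h
      _ = (k : ℝ) * (N : ℝ) ^ n := by push_cast; ring
  calc (∑ F ∈ 𝔉, (k : ℝ) ^ F.card * ((N : ℝ) - k) ^ (n - F.card)) * N
      = (N : ℝ) * ∑ F ∈ 𝔉, (k : ℝ) ^ F.card * ((N : ℝ) - k) ^ (n - F.card) := by ring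
    _ ≤ (k : ℝ) * (N : ℝ) ^ n := hcast


/-- Product-measure Erdős–Ko–Rado: an intersecting family has `ρ_p`-measure at most `p`. -/
theorem intersecting_product_measure_le
    (n : ℕ) (hn : 1 ≤ n) (p : ℝ) (hp0 : 0 ≤ p) (hp : p ≤ 1 / 2)
    (𝔉 : Finset (Finset ℕ)) (hsub : 𝔉 ⊆ (Finset.Icc 1 n).powerset)
    (hint : Intersecting' 𝔉) :
    ∑ F ∈ 𝔉, p ^ F.card * (1 - p) ^ (n - F.card) ≤ p := by
  have hcont : Continuous (fun x : ℝ => ∑ F ∈ 𝔉, x ^ F.card * (1 - x) ^ (n - F.card)) := by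
    refine continuous_finset_sum _ fun F _ => ?_
    exact (continuous_pow _).mul (((continuous_const.sub continuous_id).pow _))
  have h1 : Filter.Tendsto (fun N : ℕ => ((⌊p * N⌋₊ : ℝ) / N)) Filter.atTop (nhds p) :=
    (tendsto_nat_floor_mul_div_atTop hp0).comp tendsto_natCast_atTop_atTop
  have h2 : Filter.Tendsto
      (fun N : ℕ => ∑ F ∈ 𝔉, ((⌊p * N⌋₊ : ℝ) / N) ^ F.card
        * (1 - (⌊p * N⌋₊ : ℝ) / N) ^ (n - F.card)) Filter.atTop
      (nhds (∑ F ∈ 𝔉, p ^ F.card * (1 - p) ^ (n - F.card))) :=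
    (hcont.tendsto p).comp h1
  refine le_of_tendsto_of_tendsto h2 h1 ?_
  filter_upwards [Filter.eventually_ge_atTop 1] with N hN
  have hNpos : 0 < N := hN
  have hfloor : 2 * ⌊p * N⌋₊ ≤ N := by
    have h3 : (⌊p * N⌋₊ : ℝ) ≤ p * N := Nat.floor_le (by positivity)
    have h4 : p * N ≤ (1 / 2) * N := by
      apply mul_le_mul_of_nonneg_right hp (by positivity)
    have : (2 * ⌊p * N⌋₊ : ℝ) ≤ (N : ℝ) := by nlinarith
    exact_mod_cast this
  exact rat_ineq N ⌊p * N⌋₊ n hNpos hfloor 𝔉 hsub hint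
end

section
/- Let 𝔉 ⊆ 𝒫([n]) be a shifted intersecting family and let a_* ∈ [n] be its maximal necessary intersection point. If F, F' ∈ 𝔉 satisfy F ∩ F' ∩ [a_*] = {a_*}, then [a_*] ⊆ F ∪ F'. -/
open Finset

/-- If `𝔉` is shifted and intersecting with maximal necessary intersection point `a_*`,
and `F ∩ F' ∩ [a_*] = {a_*}`, then `[a_*] ⊆ F ∪ F'`. -/
theorem cover_of_inter_eq_singleton
    (n : ℕ) (𝔉 : Finset (Finset ℕ)) (hsub : 𝔉 ⊆ (Finset.Icc 1 n).powerset)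
    (hint : Intersecting' 𝔉) (hshift : IsShifted n 𝔉)
    (astar : ℕ) (ha1 : 1 ≤ astar) (han : astar ≤ n)
    (hNIP : IsNIP1 𝔉 astar) (hmax : ∀ b, IsNIP1 𝔉 b → b ≤ astar)
    (F F' : Finset ℕ) (hF : F ∈ 𝔉) (hF' : F' ∈ 𝔉)
    (hcap : F ∩ F' ∩ Finset.Icc 1 astar = {astar}) :
    Finset.Icc 1 astar ⊆ F ∪ F' := by
  intro b hb
  by_contra hbFU
  simp only [Finset.mem_union, not_or] at hbFU
  obtain ⟨hbF, hbF'⟩ := hbFU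
  rw [Finset.mem_Icc] at hb
  have hastar : astar ∈ F ∩ F' ∩ Finset.Icc 1 astar := by
    rw [hcap]; exact Finset.mem_singleton_self _
  simp only [Finset.mem_inter] at hastar
  have hba : b ≠ astar := fun h => hbF (h ▸ hastar.1.1)
  have hblt : b < astar := lt_of_le_of_ne hb.2 hba
  have hF'' : shift b astar F ∈ 𝔉 := hshift b astar hb.1 hblt han F hF
  rw [shift, if_pos ⟨hastar.1.1, hbF⟩] at hF''
  set F'' := insert b (F.erase astar) with hF''def
  have hSub : ∀ x ∈ F'' ∩ F', astar < x := by
    intro x hx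
    rw [Finset.mem_inter] at hx
    have hxF' := hx.2
    have hxb : x ≠ b := fun h => hbF' (h ▸ hxF')
    have hxF : x ∈ F.erase astar := by
      rcases Finset.mem_insert.mp hx.1 with h | h
      · exact absurd h hxb
      · exact h
    rw [Finset.mem_erase] at hxF
    by_contra hle
    push_neg at hle
    have hx1 : 1 ≤ x := by
      have hp := Finset.mem_powerset.mp (hsub hF)
      exact (Finset.mem_Icc.mp (hp hxF.2)).1
    have hmem : x ∈ F ∩ F' ∩ Finset.Icc 1 astar := by
      simp only [Finset.mem_inter, Finset.mem_Icc]
      exact ⟨⟨hxF.2, hxF'⟩, hx1, hle⟩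
    rw [hcap, Finset.mem_singleton] at hmem
    exact hxF.1 hmem
  have hne : (F'' ∩ F').Nonempty := hint F'' hF'' F' hF'
  set m := (F'' ∩ F').min' hne with hmdef
  have hmmem := Finset.min'_mem (F'' ∩ F') hne
  have hmgt : astar < m := hSub m hmmem
  have hset : Finset.Icc 1 m ∩ F'' ∩ F' = {m} := by
    ext x
    simp only [Finset.mem_inter, Finset.mem_Icc, Finset.mem_singleton]
    constructor
    · rintro ⟨⟨⟨h1, hxm⟩, hxF''⟩, hxF'⟩
      have := Finset.min'_le _ x (Finset.mem_inter.mpr ⟨hxF'', hxF'⟩)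
      omega
    · rintro rfl
      rw [Finset.mem_inter] at hmmem
      exact ⟨⟨⟨by omega, le_refl _⟩, hmmem.1⟩, hmmem.2⟩
  have hNIPm : IsNIP1 𝔉 m :=
    ⟨F'', hF'', F', hF', by rw [hset]; exact Finset.card_singleton _, hmmem⟩
  have := hmax m hNIPm
  omega
end

section
/- Let 𝔉 ⊆ 𝒫([n]) be an intersecting family with maximal necessary intersection point a_*. If F ∈ 𝔉 and there exists F' ∈ 𝔉 with F ∩ F' ∩ [a_*] = {a_*}, then F \ {a_*} ∉ 𝔉. -/
open Finset

/-- For `F` in `𝔉(a_*)`, the set `F \ {a_*}` is not in `𝔉`. -/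
theorem erase_not_mem_of_depends
    (n : ℕ) (𝔉 : Finset (Finset ℕ)) (hsub : 𝔉 ⊆ (Finset.Icc 1 n).powerset)
    (hint : Intersecting' 𝔉)
    (astar : ℕ) (hNIP : IsNIP1 𝔉 astar) (hmax : ∀ b, IsNIP1 𝔉 b → b ≤ astar)
    (F : Finset ℕ) (hF : F ∈ 𝔉)
    (hdep : ∃ F' ∈ 𝔉, F ∩ F' ∩ Finset.Icc 1 astar = {astar}) :
    F.erase astar ∉ 𝔉 := by
  intro hE
  obtain ⟨F', hF', heq⟩ := hdep
  have hastar : astar ∈ F ∩ F' ∩ Finset.Icc 1 astar := by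
    rw [heq]; exact Finset.mem_singleton_self _
  simp only [Finset.mem_inter, Finset.mem_Icc] at hastar
  obtain ⟨⟨haF, haF'⟩, ha1, -⟩ := hastar
  have hFsub : F ⊆ Finset.Icc 1 n := Finset.mem_powerset.mp (hsub hF)
  have hne : (F.erase astar ∩ F').Nonempty := hint _ hE _ hF'
  have hgt : ∀ x ∈ F.erase astar ∩ F', astar < x := by
    intro x hx
    simp only [Finset.mem_inter, Finset.mem_erase] at hx
    obtain ⟨⟨hxne, hxF⟩, hxF'⟩ := hx
    by_contra h
    push_neg at h
    have hx1 : 1 ≤ x := (Finset.mem_Icc.mp (hFsub hxF)).1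
    have hmem : x ∈ F ∩ F' ∩ Finset.Icc 1 astar := by
      simp [hxF, hxF', Finset.mem_Icc, hx1, h]
    rw [heq, Finset.mem_singleton] at hmem
    exact hxne hmem
  set b := (F.erase astar ∩ F').min' hne with hbdef
  have hbmem : b ∈ F.erase astar ∩ F' := Finset.min'_mem _ hne
  have hbgt : astar < b := hgt b hbmem
  simp only [Finset.mem_inter, Finset.mem_erase] at hbmem
  obtain ⟨⟨-, hbF⟩, hbF'⟩ := hbmem
  have hset : Finset.Icc 1 b ∩ F.erase astar ∩ F' = {b} := by
    ext x
    simp only [Finset.mem_inter, Finset.mem_erase, Finset.mem_Icc, Finset.mem_singleton]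
    constructor
    · rintro ⟨⟨⟨-, hxb⟩, hxE⟩, hxF'⟩
      have := Finset.min'_le _ x (Finset.mem_inter.mpr ⟨Finset.mem_erase.mpr hxE, hxF'⟩)
      omega
    · rintro rfl
      refine ⟨⟨⟨by omega, le_refl _⟩, ?_, hbF⟩, hbF'⟩
      omega
  have hNIPb : IsNIP1 𝔉 b := by
    refine ⟨F.erase astar, hE, F', hF', ?_, ?_⟩
    · rw [hset]; simp
    · simp only [Finset.mem_inter, Finset.mem_erase]
      exact ⟨⟨by omega, hbF⟩, hbF'⟩
  have := hmax b hNIPb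
  omega
end

section
/- Let r ≥ 2 and n, t ≥ 1 be integers and let 𝔉_1,…,𝔉_r ⊆ 𝒫([n]) be shifted r-cross t-intersecting families with maximal necessary intersection point a_*. Let j ∈ [r], F ∈ 𝔉_j, and F_i ∈ 𝔉_i for each i ∈ [r]\{j} be such that |[a_*] ∩ F ∩ ⋂_{i∈[r]\{j}} F_i| = t and a_* ∈ F ∩ ⋂_{i∈[r]\{j}} F_i. Then [a_*] ⊆ F ∪ ⋂_{i∈[r]\{j}} F_i. -/
open Finset

/-- `F ∈ 𝔉 j` depends on `a`, i.e. `F ∈ 𝔉_j(a)`. -/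
def FamDependsOn {r : ℕ} (t : ℕ) (𝔉 : Fin r → Finset (Finset ℕ)) (a : ℕ) (j : Fin r)
    (F : Finset ℕ) : Prop :=
  F ∈ 𝔉 j ∧ ∃ G : Fin r → Finset ℕ, (∀ i, i ≠ j → G i ∈ 𝔉 i) ∧
    (Finset.Icc 1 a ∩ F ∩ interOn (Finset.univ.erase j) G).card = t ∧
    a ∈ F ∩ interOn (Finset.univ.erase j) G

lemma mem_interOn {r : ℕ} {s : Finset (Fin r)} (hs : s.Nonempty) (G : Fin r → Finset ℕ)
    (x : ℕ) : x ∈ interOn s G ↔ ∀ i ∈ s, x ∈ G i := by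
  simp only [interOn, Finset.mem_filter, and_iff_right_iff_imp]
  intro h
  obtain ⟨i, hi⟩ := hs
  exact Finset.mem_sup.mpr ⟨i, hi, h i hi⟩

/-- For shifted `r`-cross `t`-intersecting families with maximal necessary intersection
point `a_*`, witnesses of the dependence on `a_*` cover `[a_*]`. -/
theorem cover_of_depends_witness
    (r n t : ℕ) (hr : 2 ≤ r) (hn : 1 ≤ n) (ht : 1 ≤ t)
    (𝔉 : Fin r → Finset (Finset ℕ)) (hsub : ∀ i, 𝔉 i ⊆ (Finset.Icc 1 n).powerset)
    (hshift : ∀ i, IsShifted n (𝔉 i))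
    (hcross : CrossIntersecting t 𝔉)
    (astar : ℕ) (hNIP : IsNIP t 𝔉 astar) (hmax : ∀ b, IsNIP t 𝔉 b → b ≤ astar)
    (j : Fin r) (F : Finset ℕ) (hF : F ∈ 𝔉 j)
    (G : Fin r → Finset ℕ) (hG : ∀ i, i ≠ j → G i ∈ 𝔉 i)
    (hcap : (Finset.Icc 1 astar ∩ F ∩ interOn (Finset.univ.erase j) G).card = t)
    (hmem : astar ∈ F ∩ interOn (Finset.univ.erase j) G) :
    Finset.Icc 1 astar ⊆ F ∪ interOn (Finset.univ.erase j) G := by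
  set I := interOn (Finset.univ.erase j) G with hIdef
  intro b hb
  by_contra hbno
  rw [Finset.mem_union] at hbno
  push_neg at hbno
  obtain ⟨hbF, hbI⟩ := hbno
  have hne : (Finset.univ.erase j).Nonempty := erase_univ_nonempty hr j
  rw [Finset.mem_inter] at hmem
  obtain ⟨haF, haI⟩ := hmem
  obtain ⟨hb1, hb2⟩ := Finset.mem_Icc.mp hb
  have hba : b < astar := lt_of_le_of_ne hb2 (fun h => hbF (h ▸ haF))
  have hFsub : F ⊆ Finset.Icc 1 n := Finset.mem_powerset.mp (hsub j hF)
  have h1x : ∀ x ∈ F, 1 ≤ x := fun x hx => (Finset.mem_Icc.mp (hFsub hx)).1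
  have han : astar ≤ n := (Finset.mem_Icc.mp (hFsub haF)).2
  have hF' : shift b astar F ∈ 𝔉 j := hshift j b astar hb1 hba han F hF
  have hsh : shift b astar F = insert b (F.erase astar) := by
    simp [shift, haF, hbF]
  set F' := shift b astar F with hF'def
  set G' := Function.update G j F' with hG'def
  have hG' : ∀ i, G' i ∈ 𝔉 i := by
    intro i
    by_cases h : i = j
    · subst h; simpa [hG'def] using hF'
    · rw [hG'def, Function.update_of_ne h]; exact hG i h
  have huniv : (Finset.univ : Finset (Fin r)).Nonempty := ⟨j, Finset.mem_univ j⟩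
  have hAll : ∀ x, x ∈ interAll G' ↔ x ∈ F' ∧ x ∈ I := by
    intro x
    rw [interAll, mem_interOn huniv, hIdef, mem_interOn hne]
    constructor
    · intro h
      refine ⟨by simpa [hG'def] using h j (Finset.mem_univ j), ?_⟩
      intro i hi
      have := h i (Finset.mem_univ i)
      rwa [hG'def, Function.update_of_ne (Finset.ne_of_mem_erase hi)] at this
    · rintro ⟨h1, h2⟩ i _
      by_cases hij : i = j
      · subst hij; simpa [hG'def] using h1
      · rw [hG'def, Function.update_of_ne hij]
        exact h2 i (Finset.mem_erase.mpr ⟨hij, Finset.mem_univ i⟩)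
  have hEq : interAll G' = (F ∩ I).erase astar := by
    ext x
    rw [hAll, Finset.mem_erase, Finset.mem_inter]
    constructor
    · rintro ⟨hx1, hx2⟩
      rw [hsh, Finset.mem_insert, Finset.mem_erase] at hx1
      rcases hx1 with rfl | ⟨hne', hxF⟩
      · exact absurd hx2 hbI
      · exact ⟨hne', hxF, hx2⟩
    · rintro ⟨hne', hxF, hxI⟩
      exact ⟨by rw [hsh]; exact Finset.mem_insert_of_mem (Finset.mem_erase.mpr ⟨hne', hxF⟩), hxI⟩
  have haFI : astar ∈ F ∩ I := Finset.mem_inter.mpr ⟨haF, haI⟩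
  have hcard : t + 1 ≤ (F ∩ I).card := by
    have h := hcross G' hG'
    rw [hEq, Finset.card_erase_of_mem haFI] at h
    have : 1 ≤ (F ∩ I).card := Finset.card_pos.mpr ⟨astar, haFI⟩
    omega
  -- the elements of F ∩ I above astar
  set S := (F ∩ I).filter (fun x => astar < x) with hSdef
  have hfeq : (F ∩ I).filter (fun x => ¬ astar < x) = Finset.Icc 1 astar ∩ F ∩ I := by
    ext x
    simp only [Finset.mem_filter, Finset.mem_inter, Finset.mem_Icc, not_lt]
    constructor
    · rintro ⟨⟨hxF, hxI⟩, hle⟩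
      exact ⟨⟨⟨h1x x hxF, hle⟩, hxF⟩, hxI⟩
    · rintro ⟨⟨⟨_, hle⟩, hxF⟩, hxI⟩
      exact ⟨⟨hxF, hxI⟩, hle⟩
  have hScard : 1 ≤ S.card := by
    have := Finset.card_filter_add_card_filter_not
      (s := F ∩ I) (p := fun x => astar < x)
    rw [hSdef] at *
    rw [hfeq, hcap] at this
    omega
  have hSne : S.Nonempty := Finset.card_pos.mp hScard
  set c := S.min' hSne with hcdef
  have hcS : c ∈ S := Finset.min'_mem S hSne
  have hcmin : ∀ x ∈ S, c ≤ x := fun x hx => Finset.min'_le S x hx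
  rw [hSdef, Finset.mem_filter, Finset.mem_inter] at hcS
  obtain ⟨⟨hcF, hcI⟩, hclt⟩ := hcS
  -- c is a necessary intersection point, contradicting maximality of astar
  have hcNIP : IsNIP t 𝔉 c := by
    refine ⟨G', hG', ?_, ?_⟩
    · have hset : Finset.Icc 1 c ∩ interAll G'
          = insert c ((Finset.Icc 1 astar ∩ F ∩ I).erase astar) := by
        ext x
        rw [Finset.mem_inter, hEq, Finset.mem_erase, Finset.mem_inter,
          Finset.mem_insert, Finset.mem_erase, Finset.mem_inter, Finset.mem_inter,
          Finset.mem_Icc, Finset.mem_Icc]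
        constructor
        · rintro ⟨⟨hx1, hxc⟩, hxa, hxF, hxI⟩
          by_cases hle : x ≤ astar
          · exact Or.inr ⟨hxa, ⟨⟨hx1, hle⟩, hxF⟩, hxI⟩
          · left
            have hxS : x ∈ S := by
              rw [hSdef, Finset.mem_filter, Finset.mem_inter]
              exact ⟨⟨hxF, hxI⟩, by omega⟩
            exact le_antisymm hxc (hcmin x hxS)
        · rintro (rfl | ⟨hxa, ⟨⟨hx1, hle⟩, hxF⟩, hxI⟩)
          · exact ⟨⟨h1x c hcF, le_refl c⟩, by omega, hcF, hcI⟩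
          · exact ⟨⟨hx1, by omega⟩, hxa, hxF, hxI⟩
      rw [hset, Finset.card_insert_of_notMem, Finset.card_erase_of_mem, hcap]
      · omega
      · rw [Finset.mem_inter, Finset.mem_inter, Finset.mem_Icc]
        exact ⟨⟨⟨h1x astar haF, le_refl astar⟩, haF⟩, haI⟩
      · rw [Finset.mem_erase, Finset.mem_inter, Finset.mem_inter, Finset.mem_Icc]
        rintro ⟨-, ⟨⟨-, hle⟩, -⟩, -⟩
        omega
    · rw [hEq, Finset.mem_erase, Finset.mem_inter]
      exact ⟨by omega, hcF, hcI⟩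
  have := hmax c hcNIP
  omega
end

section
/- Let r ≥ 2 and n, t ≥ 1 be integers and let 𝔉_1,…,𝔉_r ⊆ 𝒫([n]) be shifted non-empty r-cross t-intersecting families with maximal necessary intersection point a_*. If j ∈ [r] is such that every set of 𝔉_j depends on a_*, i.e., 𝔉_j = 𝔉_j(a_*), then [a_*] ⊆ F for every F ∈ 𝔉_j, that is, 𝔉_j ⊆ B_{n,a_*}. -/
open Finset

/-- `F ∈ 𝔉 j` depends on `a`, i.e. `F ∈ 𝔉_j(a)`. -/
def DependsOnAt {r : ℕ} (t : ℕ) (𝔉 : Fin r → Finset (Finset ℕ)) (a : ℕ) (j : Fin r)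
    (F : Finset ℕ) : Prop :=
  F ∈ 𝔉 j ∧ ∃ G : Fin r → Finset ℕ, (∀ i, i ≠ j → G i ∈ 𝔉 i) ∧
    (Finset.Icc 1 a ∩ F ∩ interOn (Finset.univ.erase j) G).card = t ∧
    a ∈ F ∩ interOn (Finset.univ.erase j) G

/-- If every set of `𝔉_j` depends on `a_*`, then `𝔉_j ⊆ B_{n,a_*}`. -/
theorem subset_famB_of_all_depend
    (r n t : ℕ) (hr : 2 ≤ r) (hn : 1 ≤ n) (ht : 1 ≤ t)
    (𝔉 : Fin r → Finset (Finset ℕ)) (hsub : ∀ i, 𝔉 i ⊆ (Finset.Icc 1 n).powerset)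
    (hne : ∀ i, (𝔉 i).Nonempty) (hshift : ∀ i, IsShifted n (𝔉 i))
    (hcross : CrossIntersecting t 𝔉)
    (astar : ℕ) (hNIP : IsNIP t 𝔉 astar) (hmax : ∀ b, IsNIP t 𝔉 b → b ≤ astar)
    (j : Fin r) (hdep : ∀ F ∈ 𝔉 j, DependsOnAt t 𝔉 astar j F) :
    ∀ F ∈ 𝔉 j, Finset.Icc 1 astar ⊆ F := by
  intro F hF b hb
  by_contra hbF
  obtain ⟨-, G, hG, hcard, hmem⟩ := hdep F hF
  have haF : astar ∈ F := (Finset.mem_inter.mp hmem).1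
  have hbIcc := Finset.mem_Icc.mp hb
  have hbne : b ≠ astar := fun h => hbF (h ▸ haF)
  have hblt : b < astar := lt_of_le_of_ne hbIcc.2 hbne
  have han : astar ≤ n :=
    (Finset.mem_Icc.mp (Finset.mem_powerset.mp (hsub j hF) haF)).2
  have hF' : shift b astar F ∈ 𝔉 j := hshift j b astar hbIcc.1 hblt han F hF
  obtain ⟨-, G', hG', hcard', hmem'⟩ := hdep _ hF'
  have hmem'' : astar ∈ shift b astar F := (Finset.mem_inter.mp hmem').1
  simp only [shift, haF, hbF, not_false_iff, and_self, if_true,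
    Finset.mem_insert, Finset.mem_erase] at hmem''
  rcases hmem'' with h | h
  · exact hbne h.symm
  · exact h.1 rfl
end

section
/- Let n, t ≥ 1 be integers, let 𝔉_1, 𝔉_2 ⊆ 𝒫([n]) be non-empty 2-cross t-intersecting families, and let a_* ∈ [n] be such that no b > a_* is a necessary intersection point of 𝔉_1, 𝔉_2. If [a_*] ⊆ F' for every F' ∈ 𝔉_2, then |F ∩ [a_*]| ≥ t for every F ∈ 𝔉_1; that is, 𝔉_1 ⊆ A_{n,a_*,t} and 𝔉_2 ⊆ B_{n,a_*}. -/
open Finset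

/-- Base case `r = 2`: if `[a_*] ⊆ F'` for every `F' ∈ 𝔉₂`, then every `F ∈ 𝔉₁`
has at least `t` elements in `[a_*]`. -/
theorem mem_famA_of_other_in_famB
    (n t : ℕ) (hn : 1 ≤ n) (ht : 1 ≤ t)
    (𝔉₁ 𝔉₂ : Finset (Finset ℕ))
    (hsub₁ : 𝔉₁ ⊆ (Finset.Icc 1 n).powerset) (hsub₂ : 𝔉₂ ⊆ (Finset.Icc 1 n).powerset)
    (hne₁ : 𝔉₁.Nonempty) (hne₂ : 𝔉₂.Nonempty)
    (hcross : ∀ F₁ ∈ 𝔉₁, ∀ F₂ ∈ 𝔉₂, t ≤ (F₁ ∩ F₂).card)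
    (astar : ℕ) (ha1 : 1 ≤ astar) (han : astar ≤ n)
    (hmax : ∀ b, astar < b →
      ¬ ∃ F₁ ∈ 𝔉₁, ∃ F₂ ∈ 𝔉₂, (Finset.Icc 1 b ∩ F₁ ∩ F₂).card = t ∧ b ∈ F₁ ∩ F₂)
    (hB : ∀ F' ∈ 𝔉₂, Finset.Icc 1 astar ⊆ F') :
    ∀ F ∈ 𝔉₁, t ≤ (F ∩ Finset.Icc 1 astar).card := by
  intro F hF
  by_contra hlt
  push_neg at hlt
  obtain ⟨F₂, hF₂⟩ := hne₂
  set S := F ∩ F₂ with hS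
  have hScard : t ≤ S.card := hcross F hF F₂ hF₂
  have hSsub : S ⊆ Finset.Icc 1 n := fun x hx =>
    Finset.mem_powerset.mp (hsub₁ hF) (Finset.mem_inter.mp hx).1
  have hSmall : (Finset.Icc 1 astar ∩ S).card < t := by
    refine lt_of_le_of_lt (Finset.card_le_card ?_) hlt
    intro x hx
    simp only [hS, Finset.mem_inter] at hx ⊢
    exact ⟨hx.2.1, hx.1⟩
  set T := S.filter (fun x => t ≤ (Finset.Icc 1 x ∩ S).card) with hT
  have hSne : S.Nonempty := Finset.card_pos.mp (lt_of_lt_of_le ht hScard)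
  have hTne : T.Nonempty := by
    refine ⟨S.max' hSne, Finset.mem_filter.mpr ⟨S.max'_mem hSne, ?_⟩⟩
    have hsub : S ⊆ Finset.Icc 1 (S.max' hSne) ∩ S := by
      intro x hx
      refine Finset.mem_inter.mpr ⟨?_, hx⟩
      exact Finset.mem_Icc.mpr ⟨(Finset.mem_Icc.mp (hSsub hx)).1, S.le_max' x hx⟩
    exact le_trans hScard (Finset.card_le_card hsub)
  set b := T.min' hTne with hb
  have hbT : b ∈ T := T.min'_mem hTne
  obtain ⟨hbS, hbcount⟩ := Finset.mem_filter.mp hbT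
  have hba : astar < b := by
    by_contra h
    push_neg at h
    have hsub : Finset.Icc 1 b ∩ S ⊆ Finset.Icc 1 astar ∩ S :=
      Finset.inter_subset_inter (Finset.Icc_subset_Icc_right h) (le_refl S)
    exact absurd (le_trans hbcount (Finset.card_le_card hsub)) (not_le.mpr hSmall)
  have hb1 : 1 ≤ b := (Finset.mem_Icc.mp (hSsub hbS)).1
  have hexact : (Finset.Icc 1 b ∩ S).card = t := by
    by_contra hne
    have hgt : t < (Finset.Icc 1 b ∩ S).card := lt_of_le_of_ne hbcount (Ne.symm hne)
    have hsub' : Finset.Icc 1 (b-1) ∩ S = (Finset.Icc 1 b ∩ S).erase b := by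
      ext x
      simp only [Finset.mem_erase, Finset.mem_inter, Finset.mem_Icc]
      constructor
      · rintro ⟨⟨h1, h2⟩, h3⟩
        exact ⟨by omega, ⟨h1, by omega⟩, h3⟩
      · rintro ⟨hxb, ⟨h1, h2⟩, h3⟩
        exact ⟨⟨h1, by omega⟩, h3⟩
    have hcard' : t ≤ (Finset.Icc 1 (b-1) ∩ S).card := by
      rw [hsub', Finset.card_erase_of_mem]
      · omega
      · exact Finset.mem_inter.mpr ⟨Finset.mem_Icc.mpr ⟨hb1, le_refl b⟩, hbS⟩
    have hne' : (Finset.Icc 1 (b-1) ∩ S).Nonempty :=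
      Finset.card_pos.mp (lt_of_lt_of_le ht hcard')
    set b' := (Finset.Icc 1 (b-1) ∩ S).max' hne' with hb'
    have hb'mem := (Finset.Icc 1 (b-1) ∩ S).max'_mem hne'
    have hb'S : b' ∈ S := (Finset.mem_inter.mp hb'mem).2
    have hb'lt : b' < b := by
      have := (Finset.mem_Icc.mp (Finset.mem_inter.mp hb'mem).1).2
      omega
    have hb'count : t ≤ (Finset.Icc 1 b' ∩ S).card := by
      refine le_trans hcard' (Finset.card_le_card ?_)
      intro x hx
      have hxle := (Finset.Icc 1 (b-1) ∩ S).le_max' x hx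
      obtain ⟨hx1, hx2⟩ := Finset.mem_inter.mp hx
      exact Finset.mem_inter.mpr ⟨Finset.mem_Icc.mpr ⟨(Finset.mem_Icc.mp hx1).1, hxle⟩, hx2⟩
    have hb'T : b' ∈ T := Finset.mem_filter.mpr ⟨hb'S, hb'count⟩
    exact absurd (T.min'_le b' hb'T) (not_le.mpr hb'lt)
  refine hmax b hba ⟨F, hF, F₂, hF₂, ?_, hbS⟩
  rw [Finset.inter_assoc]
  exact hexact
end

section
/- Let r ≥ 2 and n, t ≥ 1 be integers. If 𝔉_1,…,𝔉_r ⊆ 𝒫([n]) are non-empty r-cross t-intersecting families, then there exists a necessary intersection point a ∈ [n] of 𝔉_1,…,𝔉_r, and every necessary intersection point of 𝔉_1,…,𝔉_r is at least t. -/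
open Finset

/-- Non-empty `r`-cross `t`-intersecting families have a necessary intersection point,
and every necessary intersection point is at least `t`. -/
theorem exists_nip_and_nip_ge
    (r n t : ℕ) (hr : 2 ≤ r) (hn : 1 ≤ n) (ht : 1 ≤ t)
    (𝔉 : Fin r → Finset (Finset ℕ)) (hsub : ∀ i, 𝔉 i ⊆ (Finset.Icc 1 n).powerset)
    (hne : ∀ i, (𝔉 i).Nonempty) (hcross : CrossIntersecting t 𝔉) :
    (∃ a : ℕ, 1 ≤ a ∧ a ≤ n ∧ IsNIP t 𝔉 a) ∧ (∀ a : ℕ, IsNIP t 𝔉 a → t ≤ a) := by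
  constructor
  · choose G hG using hne
    set S := interAll G with hS
    have hSsub : S ⊆ Finset.Icc 1 n := by
      intro x hx
      have hx' : x ∈ Finset.univ.sup G := (Finset.mem_filter.mp hx).1
      have : Finset.univ.sup G ⊆ Finset.Icc 1 n :=
        Finset.sup_le fun i _ => Finset.mem_powerset.mp (hsub i (hG i))
      exact this hx'
    have htS : t ≤ S.card := hcross G hG
    have hPn : t ≤ (Finset.Icc 1 n ∩ S).card := by
      rwa [Finset.inter_eq_right.mpr hSsub]
    have hex : ∃ a, t ≤ (Finset.Icc 1 a ∩ S).card := ⟨n, hPn⟩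
    set a := Nat.find hex with ha
    have hPa : t ≤ (Finset.Icc 1 a ∩ S).card := Nat.find_spec hex
    have han : a ≤ n := Nat.find_le hPn
    have ha0 : a ≠ 0 := by
      intro h
      have := Nat.find_spec hex
      rw [← ha, h] at this
      simp at this
      omega
    have hprev : ¬ t ≤ (Finset.Icc 1 (a - 1) ∩ S).card :=
      Nat.find_min hex (by omega)
    have haS : a ∈ S := by
      by_contra hx
      have : Finset.Icc 1 a ∩ S = Finset.Icc 1 (a - 1) ∩ S := by
        ext x
        simp only [Finset.mem_inter, Finset.mem_Icc]
        constructor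
        · rintro ⟨⟨h1, h2⟩, h3⟩
          refine ⟨⟨h1, ?_⟩, h3⟩
          rcases eq_or_lt_of_le h2 with h | h
          · exact absurd (h ▸ h3) hx
          · omega
        · rintro ⟨⟨h1, h2⟩, h3⟩; exact ⟨⟨h1, by omega⟩, h3⟩
      rw [this] at hPa
      exact hprev hPa
    have hsubins : Finset.Icc 1 a ∩ S ⊆ insert a (Finset.Icc 1 (a - 1) ∩ S) := by
      intro x hx
      simp only [Finset.mem_inter, Finset.mem_Icc] at hx
      rcases eq_or_lt_of_le hx.1.2 with h | h
      · exact Finset.mem_insert.mpr (Or.inl h)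
      · exact Finset.mem_insert.mpr (Or.inr (by
          simp only [Finset.mem_inter, Finset.mem_Icc]
          exact ⟨⟨hx.1.1, by omega⟩, hx.2⟩))
    have hcard : (Finset.Icc 1 a ∩ S).card = t := by
      have h1 : (Finset.Icc 1 a ∩ S).card ≤ (Finset.Icc 1 (a - 1) ∩ S).card + 1 :=
        le_trans (Finset.card_le_card hsubins) (Finset.card_insert_le _ _)
      omega
    exact ⟨a, by omega, han, G, hG, hcard, haS⟩
  · rintro a ⟨G, hG, hcard, haG⟩
    have := Finset.card_le_card (Finset.inter_subset_left (s₂ := interAll G)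
      (s₁ := Finset.Icc 1 a))
    rw [hcard, Nat.card_Icc] at this
    omega
end
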